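/- Suppose α₁ ≥ α₂ and α₁α₂ > β₁β₂. Then almost surely on the event {τ = ∞}, limsup_{n→∞} R_n/n < α₁ + rβ₂. -/

import Mathlib

open MeasureTheory Filter

lemma det_telescope {R M d : ℕ → ℝ}
    (hdecomp : ∀ n, R (n+1) - R n = (M (n+1) - M n) + d n) :
    ∀ a b : ℕ, a ≤ b → R b = R a + (M b - M a) + ∑ k ∈ Finset.Ico a b, d k := by
  intro a b hab
  induction b with
  | zero => simp [Nat.le_zero.mp hab]
  | succ n ih =>
    rcases Nat.lt_or_ge a (n+1) with h | h
    · have h' : a ≤ n := Nat.lt_succ_iff.mp h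
      rw [Finset.sum_Ico_succ_top h']
      have h2 := ih h'
      have := hdecomp n
      linarith
    · have : a = n + 1 := le_antisymm hab h
      simp [this]

lemma det_lower {R : ℕ → ℝ} {c : ℝ} (hstep : ∀ n, |R (n+1) - R n| ≤ c) :
    ∀ j k : ℕ, R (k + j) - c * j ≤ R k := by
  intro j
  induction j with
  | zero => simp
  | succ n ih =>
    intro k
    have h1 := abs_le.mp (hstep (k + n))
    have := ih k
    push_cast
    have : R (k + n + 1) - R (k+n) ≤ c := h1.2
    have e : k + (n+1) = (k + n) + 1 := by ring
    rw [e]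
    push_cast
    linarith [ih k, h1.2]

set_option maxHeartbeats 1000000 in
lemma det_limsup {R M d : ℕ → ℝ} {c C K l : ℝ} (hl : 0 < l) (hc : 0 < c) (hC : 0 ≤ C) (hK : 0 ≤ K)
    (hRl : ∀ n, l ≤ R n)
    (hstep : ∀ n, |R (n+1) - R n| ≤ c)
    (hdecomp : ∀ n, R (n+1) - R n = (M (n+1) - M n) + d n)
    (hd : ∀ n, d n ≤ K + C / R n)
    (hM : Filter.Tendsto (fun n => M n / n) Filter.atTop (nhds 0)) :
    Filter.limsup (fun n : ℕ => R n / n) Filter.atTop ≤ K := by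
  have hR0 : ∀ n, 0 < R n := fun n => lt_of_lt_of_le hl (hRl n)
  -- upper bound on R n / n
  have hub : ∀ n : ℕ, R n ≤ R 0 + c * n := by
    intro n
    induction n with
    | zero => simp
    | succ k ih =>
      have := (abs_le.mp (hstep k)).2
      push_cast
      linarith
  have hunn : ∀ n : ℕ, 0 ≤ R n / n := fun n =>
    div_nonneg (hR0 n).le (Nat.cast_nonneg n)
  have hbddabove : IsBoundedUnder (· ≤ ·) atTop (fun n : ℕ => R n / n) := by
    apply isBoundedUnder_of_eventually_le (a := |R 0| + c)
    filter_upwards [eventually_ge_atTop 1] with n hn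
    have hn' : (1:ℝ) ≤ n := by exact_mod_cast hn
    have hnpos : (0:ℝ) < n := by linarith
    rw [div_le_iff₀ hnpos]
    have : R 0 ≤ |R 0| * n := by
      calc R 0 ≤ |R 0| := le_abs_self _
      _ = |R 0| * 1 := by ring
      _ ≤ |R 0| * n := by nlinarith [abs_nonneg (R 0)]
    nlinarith [hub n]
  have hbddbelow : IsBoundedUnder (· ≥ ·) atTop (fun n : ℕ => R n / n) :=
    isBoundedUnder_of_eventually_ge (Eventually.of_forall hunn)
  have hcob : IsCoboundedUnder (· ≤ ·) atTop (fun n : ℕ => R n / n) :=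
    hbddbelow.isCoboundedUnder_le
  set L := Filter.limsup (fun n : ℕ => R n / n) Filter.atTop with hLdef
  by_contra hcon
  push_neg at hcon
  obtain ⟨δ, hδdef⟩ : ∃ δ : ℝ, δ = L - K := ⟨_, rfl⟩
  have hδ : 0 < δ := by rw [hδdef]; linarith
  obtain ⟨η, hηdef⟩ : ∃ η : ℝ, η = min (1/2 : ℝ) (δ / (4*c)) := ⟨_, rfl⟩
  have hη0 : 0 < η := hηdef ▸ lt_min (by norm_num) (by positivity)
  have hη2 : η ≤ 1/2 := hηdef ▸ min_le_left _ _
  have hηc : c * η ≤ δ/4 := by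
    have h1 : η ≤ δ/(4*c) := hηdef ▸ min_le_right _ _
    have h2 : c * η ≤ c * (δ/(4*c)) := mul_le_mul_of_nonneg_left h1 hc.le
    have h3 : c * (δ/(4*c)) = δ/4 := by field_simp
    linarith
  obtain ⟨ε, hεdef⟩ : ∃ ε : ℝ, ε = η * δ / 8 := ⟨_, rfl⟩
  have hε0 : 0 < ε := by rw [hεdef]; positivity
  have hεδ : ε ≤ δ/4 := by
    have h1 : η * δ ≤ 1/2 * δ := mul_le_mul_of_nonneg_right hη2 hδ.le
    rw [hεdef]; linarith
  have hL0 : 0 < L := lt_of_le_of_lt hK hcon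
  have E1 : ∀ᶠ k : ℕ in atTop, R k / k < L + ε :=
    eventually_lt_of_limsup_lt (by linarith) hbddabove
  have E3 : ∀ᶠ n : ℕ in atTop, |M n| ≤ ε * n := by
    obtain ⟨N, hN⟩ := (Metric.tendsto_atTop.mp hM) ε hε0
    filter_upwards [eventually_ge_atTop (max N 1)] with n hn
    have h1 := hN n (le_trans (le_max_left _ _) hn)
    have hn1 : 1 ≤ n := le_trans (le_max_right _ _) hn
    have hnpos : (0:ℝ) < n := by exact_mod_cast hn1
    rw [Real.dist_eq, sub_zero, abs_div, abs_of_pos hnpos, div_lt_iff₀ hnpos] at h1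
    linarith
  obtain ⟨N₁, hN₁⟩ := E1.exists_forall_of_atTop
  obtain ⟨N₂, hN₂⟩ := E3.exists_forall_of_atTop
  have F : ∃ᶠ n : ℕ in atTop, L - ε < R n / n :=
    frequently_lt_of_lt_limsup hcob (by linarith)
  clear_value L
  obtain ⟨nC, hnC⟩ := exists_nat_ge (2*C/(δ*ε))
  obtain ⟨nB, hnB⟩ := exists_nat_ge ((L+ε)/(η*δ/2))
  obtain ⟨n, hn, hFn⟩ := (F.and_eventually (eventually_ge_atTop
      (max (max (2*N₁ + 2) (2*N₂+2)) (max (nC+1) (nB+1))))).exists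
  have hn1 : 2*N₁ + 2 ≤ n := le_trans (le_trans (le_max_left _ _) (le_max_left _ _)) hFn
  have hn2 : 2*N₂ + 2 ≤ n := le_trans (le_trans (le_max_right _ _) (le_max_left _ _)) hFn
  have hn3 : nC + 1 ≤ n := le_trans (le_trans (le_max_left _ _) (le_max_right _ _)) hFn
  have hn4 : nB + 1 ≤ n := le_trans (le_trans (le_max_right _ _) (le_max_right _ _)) hFn
  have hnpos : (0:ℝ) < n := by
    have : (2:ℕ) ≤ n := by omega
    have : (2:ℝ) ≤ n := by exact_mod_cast this
    linarith
  obtain ⟨θ, hθdef⟩ : ∃ θ : ℝ, θ = 1 - η := ⟨_, rfl⟩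
  have hθ0 : (1:ℝ)/2 ≤ θ := by rw [hθdef]; linarith
  have hθ1 : θ ≤ 1 := by rw [hθdef]; linarith
  obtain ⟨m, hmdef⟩ : ∃ m : ℕ, m = ⌈θ * (n:ℝ)⌉₊ := ⟨_, rfl⟩
  have hm1 : θ * n ≤ m := hmdef ▸ Nat.le_ceil _
  have hm2 : (m:ℝ) ≤ θ*n + 1 := by
    rw [hmdef]
    exact (Nat.ceil_lt_add_one (by positivity)).le
  have hmn : m ≤ n := by
    rw [hmdef]
    apply Nat.ceil_le.mpr
    have : θ * n ≤ 1 * n := mul_le_mul_of_nonneg_right hθ1 hnpos.le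
    simpa using this
  have hmcast : (m:ℝ) ≤ n := by exact_mod_cast hmn
  have hHalf : (1/2:ℝ) * n ≤ θ * n := mul_le_mul_of_nonneg_right hθ0 hnpos.le
  have hmge : ∀ N : ℕ, 2*N + 2 ≤ n → N ≤ m := by
    intro N hN
    have h1 : (2*(N:ℝ) + 2 : ℝ) ≤ n := by exact_mod_cast hN
    have : (N:ℝ) ≤ m := by linarith
    exact_mod_cast this
  have hmN₁ : N₁ ≤ m := hmge N₁ hn1
  have hmN₂ : N₂ ≤ m := hmge N₂ hn2
  have hmpos : (0:ℝ) < m := by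
    have h0 : 0 ≤ m := hmge 0 (by omega)
    have : (2:ℝ) ≤ n := by
      have : (2:ℕ) ≤ n := by omega
      exact_mod_cast this
    linarith
  have hRn : (L - ε) * n < R n := by
    rw [lt_div_iff₀ hnpos] at hn
    linarith
  -- lower bound for R k on [m, n]
  have hRk : ∀ k, m ≤ k → k ≤ n → (δ/2) * n ≤ R k := by
    intro k hk1 hk2
    have h1 := det_lower hstep (n - k) k
    have he : k + (n - k) = n := by omega
    rw [he] at h1
    have hcast : ((n - k : ℕ) : ℝ) = (n:ℝ) - k := by
      push_cast [Nat.cast_sub hk2]; ring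
    rw [hcast] at h1
    have hkm : (m:ℝ) ≤ k := by exact_mod_cast hk1
    have hnk : (n:ℝ) - k ≤ η * n := by
      have : θ * n + η * n = n := by rw [hθdef]; ring
      linarith
    have hc1 : c * ((n:ℝ) - k) ≤ c * (η * n) := by
      apply mul_le_mul_of_nonneg_left hnk hc.le
    have hc2 : c * (η*n) ≤ (δ/4) * n := by
      have := mul_le_mul_of_nonneg_right hηc hnpos.le
      calc c * (η*n) = c * η * n := by ring
      _ ≤ δ/4 * n := this
    have hLn : (δ/2) * n ≤ (L - ε - δ/4) * n := by
      apply mul_le_mul_of_nonneg_right _ hnpos.le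
      have : δ = L - K := hδdef
      linarith
    linarith
  have hCR : ∀ k, m ≤ k → k ≤ n → C / R k ≤ ε := by
    intro k hk1 hk2
    have h1 := hRk k hk1 hk2
    have h2 : (0:ℝ) < (δ/2) * n := by positivity
    have h3 : C / R k ≤ C / ((δ/2)*n) :=
      div_le_div_of_nonneg_left hC h2 h1 |>.trans_eq rfl
    have h4 : C / ((δ/2)*n) ≤ ε := by
      rw [div_le_iff₀ h2]
      have hnC' : 2*C/(δ*ε) ≤ (n:ℝ) := by
        have : (nC:ℝ) ≤ n := by exact_mod_cast Nat.le_of_succ_le hn3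
        linarith
      rw [div_le_iff₀ (by positivity : (0:ℝ) < δ*ε)] at hnC'
      linarith
    linarith
  -- sum bound
  have hsum : ∑ k ∈ Finset.Ico m n, d k ≤ ((n:ℝ) - m) * (K + ε) := by
    have h1 : ∑ k ∈ Finset.Ico m n, d k ≤ ∑ k ∈ Finset.Ico m n, (K + ε) := by
      apply Finset.sum_le_sum
      intro k hk
      obtain ⟨hk1, hk2⟩ := Finset.mem_Ico.mp hk
      have := hd k
      have := hCR k hk1 hk2.le
      linarith
    have h2 : ∑ k ∈ Finset.Ico m n, (K + ε : ℝ) = ((n:ℝ) - m) * (K + ε) := by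
      rw [Finset.sum_const, Nat.card_Ico, nsmul_eq_mul, Nat.cast_sub hmn]
    linarith
  -- R m bound
  have hRm : R m < (L + ε) * m := by
    have := hN₁ m hmN₁
    rw [div_lt_iff₀ hmpos] at this
    linarith
  -- M bounds
  have hMn : |M n| ≤ ε * n := hN₂ n (by omega)
  have hMm : |M m| ≤ ε * n := by
    have h1 := hN₂ m hmN₂
    have : ε * m ≤ ε * n := mul_le_mul_of_nonneg_left hmcast hε0.le
    linarith
  have htel := det_telescope hdecomp m n hmn
  -- master inequality
  have hmaster : (L - ε) * n < (L + ε) * (θ*n + 1) + 2*(ε*n) + (η*n) * (K + ε) := by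
    have hAm : (L + ε) * m ≤ (L + ε) * (θ*n + 1) :=
      mul_le_mul_of_nonneg_left hm2 (by linarith)
    have hBm : ((n:ℝ) - m) * (K + ε) ≤ (η*n) * (K + ε) := by
      apply mul_le_mul_of_nonneg_right _ (by linarith)
      have : θ * n + η * n = n := by rw [hθdef]; ring
      linarith
    have h1 := abs_le.mp hMn
    have h2 := abs_le.mp hMm
    linarith
  -- derive contradiction
  have hεn : ε * (n:ℝ) = η * δ * n / 8 := by rw [hεdef]; ring
  have hηδn : η * (δ * (n:ℝ)) = η * (L*(n:ℝ)) - η * (K*(n:ℝ)) := by rw [hδdef]; ring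
  have hLθn : L * (θ * (n:ℝ)) = L*(n:ℝ) - η * (L*(n:ℝ)) := by rw [hθdef]; ring
  have hεθn : ε * (θ * (n:ℝ)) = ε*(n:ℝ) - η * (ε*(n:ℝ)) := by rw [hθdef]; ring
  have hfin : (η*δ/2) * n < L + ε := by linarith [hmaster, hεn, hηδn, hLθn, hεθn]
  have hnB' : L + ε ≤ (η*δ/2) * n := by
    have h1 : (nB:ℝ) ≤ n := by exact_mod_cast Nat.le_of_succ_le hn4
    have h2 : (L+ε)/(η*δ/2) ≤ (n:ℝ) := by linarith
    rw [div_le_iff₀ (by positivity : (0:ℝ) < η*δ/2)] at h2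
    linarith
  linarith
lemma int_bdd {Ω : Type*} {m0 : MeasurableSpace Ω} {P : Measure Ω} [IsFiniteMeasure P]
    {f : Ω → ℝ} (hf : AEStronglyMeasurable f P) {b : ℝ} (hb : ∀ᵐ ω ∂P, |f ω| ≤ b) :
    Integrable f P :=
  Integrable.mono' (integrable_const b) hf
    (by filter_upwards [hb] with ω h; simpa [Real.norm_eq_abs] using h)

set_option maxHeartbeats 2000000 in
lemma mart_slln {Ω : Type*} {m0 : MeasurableSpace Ω} (P : Measure Ω) [IsProbabilityMeasure P]
    (ℱ : Filtration ℕ m0) (Δ : ℕ → Ω → ℝ) (c : ℝ) (hc : 0 < c)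
    (hadp : ∀ n, StronglyMeasurable[ℱ (n+1)] (Δ n))
    (hbdd : ∀ n, ∀ᵐ ω ∂P, |Δ n ω| ≤ c)
    (hcond : ∀ n, P[Δ n | ℱ n] =ᵐ[P] 0) :
    ∀ᵐ ω ∂P, Tendsto (fun n => (∑ k ∈ Finset.range n, Δ k ω) / (n:ℝ)) atTop (nhds 0) := by
  set M : ℕ → Ω → ℝ := fun n ω => ∑ k ∈ Finset.range n, Δ k ω with hMdef
  -- measurability
  have hΔsm : ∀ n, StronglyMeasurable (Δ n) := fun n => (hadp n).mono (ℱ.le _)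
  have hMsmF : ∀ n, StronglyMeasurable[ℱ n] (M n) := by
    intro n
    apply Finset.stronglyMeasurable_fun_sum
    intro k hk
    exact (hadp k).mono (ℱ.mono (Finset.mem_range.mp hk))
  have hMsm : ∀ n, StronglyMeasurable (M n) := fun n => (hMsmF n).mono (ℱ.le _)
  have hMbdd : ∀ n, ∀ᵐ ω ∂P, |M n ω| ≤ c * n := by
    intro n
    have := ae_all_iff.mpr hbdd
    filter_upwards [this] with ω hω
    calc |M n ω| ≤ ∑ k ∈ Finset.range n, |Δ k ω| := Finset.abs_sum_le_sum_abs _ _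
    _ ≤ ∑ _k ∈ Finset.range n, c := Finset.sum_le_sum fun k _ => hω k
    _ = c * n := by simp [mul_comm]
  have hΔint : ∀ n, Integrable (Δ n) P := fun n => int_bdd (hΔsm n).aestronglyMeasurable (hbdd n)
  -- orthogonality
  have horth : ∀ n (g : Ω → ℝ) (b : ℝ), StronglyMeasurable[ℱ n] g → (∀ᵐ ω ∂P, |g ω| ≤ b) →
      ∫ ω, g ω * Δ n ω ∂P = 0 := by
    intro n g b hg hgb
    have hgsm : StronglyMeasurable g := hg.mono (ℱ.le _)
    have hgΔint : Integrable (g * Δ n) P := by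
      apply int_bdd (hgsm.mul (hΔsm n)).aestronglyMeasurable (b := b * c)
      filter_upwards [hgb, hbdd n] with ω h1 h2
      have h0 : 0 ≤ |g ω| := abs_nonneg _
      calc |(g * Δ n) ω| = |g ω| * |Δ n ω| := abs_mul _ _
      _ ≤ b * c := mul_le_mul h1 h2 (abs_nonneg _) (le_trans h0 h1)
    have h1 : ∫ ω, (g * Δ n) ω ∂P = ∫ ω, (P[g * Δ n | ℱ n]) ω ∂P :=
      (integral_condExp (ℱ.le n)).symm
    have h2 : P[g * Δ n | ℱ n] =ᵐ[P] g * P[Δ n | ℱ n] :=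
      condExp_mul_of_stronglyMeasurable_left hg hgΔint (hΔint n)
    have h3 : P[g * Δ n | ℱ n] =ᵐ[P] 0 := by
      filter_upwards [h2, hcond n] with ω e1 e2
      simp [e1, Pi.mul_apply, e2]
    calc ∫ ω, g ω * Δ n ω ∂P = ∫ ω, (P[g * Δ n | ℱ n]) ω ∂P := h1
    _ = ∫ _ω, (0:ℝ) ∂P := integral_congr_ae h3
    _ = 0 := by simp
  have hMsucc : ∀ n ω, M (n+1) ω = M n ω + Δ n ω := by
    intro n ω; simp [hMdef, Finset.sum_range_succ]
  -- integrability of products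
  have hprod_int : ∀ n (i j : ℕ), Integrable (fun ω => M n ω ^ i * Δ n ω ^ j) P := by
    intro n i j
    apply int_bdd (((hMsm n).pow i).mul ((hΔsm n).pow j)).aestronglyMeasurable
      (b := (c*n)^i * c^j)
    filter_upwards [hMbdd n, hbdd n] with ω h1 h2
    simp only [Pi.mul_apply, Pi.pow_apply]
    rw [abs_mul, abs_pow, abs_pow]
    apply mul_le_mul (pow_le_pow_left₀ (abs_nonneg _) h1 i)
      (pow_le_pow_left₀ (abs_nonneg _) h2 j) (by positivity) (by positivity)
  -- second moments
  have he2 : ∀ n, ∫ ω, M n ω ^ 2 ∂P ≤ c^2 * n := by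
    intro n
    induction n with
    | zero => simp [hMdef]
    | succ k ih =>
      have hexp : ∀ ω, M (k+1) ω ^ 2 = M k ω ^ 2 + (2 * (M k ω * Δ k ω) + Δ k ω ^ 2) := by
        intro ω; rw [hMsucc]; ring
      have hint1 : Integrable (fun ω => M k ω ^ 2) P := by
        simpa using hprod_int k 2 0
      have hint2 : Integrable (fun ω => M k ω * Δ k ω) P := by
        simpa using hprod_int k 1 1
      have hint3 : Integrable (fun ω => Δ k ω ^ 2) P := by
        simpa using hprod_int k 0 2
      have horth1 : ∫ ω, M k ω * Δ k ω ∂P = 0 :=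
        horth k (M k) (c*k) (hMsmF k) (hMbdd k)
      have hq : ∫ ω, Δ k ω ^ 2 ∂P ≤ c^2 := by
        have hb : ∀ᵐ ω ∂P, Δ k ω ^ 2 ≤ c^2 := by
          filter_upwards [hbdd k] with ω h
          calc Δ k ω ^ 2 = |Δ k ω| ^ 2 := (sq_abs _).symm
          _ ≤ c^2 := pow_le_pow_left₀ (abs_nonneg _) h 2
        calc ∫ ω, Δ k ω ^ 2 ∂P ≤ ∫ _ω, c^2 ∂P := integral_mono_ae hint3 (integrable_const _) hb
        _ = c^2 := by simp
      have hint4 : Integrable (fun ω => 2 * (M k ω * Δ k ω) + Δ k ω ^ 2) P := by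
        exact (hint2.const_mul 2).add hint3
      calc ∫ ω, M (k+1) ω ^ 2 ∂P
          = ∫ ω, (M k ω ^ 2 + (2 * (M k ω * Δ k ω) + Δ k ω ^ 2)) ∂P := by
            exact integral_congr_ae (Eventually.of_forall hexp)
        _ = (∫ ω, M k ω ^ 2 ∂P) + ∫ ω, (2 * (M k ω * Δ k ω) + Δ k ω ^ 2) ∂P :=
            integral_add hint1 hint4
        _ = (∫ ω, M k ω ^ 2 ∂P) + ((2 * ∫ ω, M k ω * Δ k ω ∂P) + ∫ ω, Δ k ω ^ 2 ∂P) := by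
            rw [integral_add (hint2.const_mul 2) hint3, integral_const_mul]
        _ ≤ c^2 * k + (2 * 0 + c^2) := by
            rw [horth1]; push_cast; linarith
        _ ≤ c^2 * ((k:ℝ)+1) := by nlinarith [sq_nonneg c]
        _ = c^2 * ((k+1 : ℕ):ℝ) := by push_cast; ring
  obtain ⟨D, hDdef⟩ : ∃ D : ℝ, D = 11*c^4 + 4*c^3 + 4*c^5 := ⟨_, rfl⟩
  have hD1 : 6*c^4 + 4*c^5 ≤ D := by rw [hDdef]; nlinarith [pow_pos hc 3, pow_pos hc 4, pow_pos hc 5]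
  have hD2 : 4*c^3 + c^4 ≤ D := by rw [hDdef]; nlinarith [pow_pos hc 3, pow_pos hc 4, pow_pos hc 5]
  have hD0 : 0 < D := by rw [hDdef]; positivity
  have he4 : ∀ n, ∫ ω, M n ω ^ 4 ∂P ≤ D * ((n:ℝ)+1)^2 := by
    intro n
    induction n with
    | zero =>
      simp only [hMdef]
      simp [Finset.range_zero]
      nlinarith
    | succ k ih =>
      have im2 : Integrable (fun ω => M k ω ^ 2) P := by simpa using hprod_int k 2 0
      have im4 : Integrable (fun ω => M k ω ^ 4) P := by simpa using hprod_int k 4 0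
      have i31 : Integrable (fun ω => M k ω ^ 3 * Δ k ω) P := by simpa using hprod_int k 3 1
      have i22 : Integrable (fun ω => M k ω ^ 2 * Δ k ω ^ 2) P := hprod_int k 2 2
      have i13 : Integrable (fun ω => M k ω * Δ k ω ^ 3) P := by simpa using hprod_int k 1 3
      have i04 : Integrable (fun ω => Δ k ω ^ 4) P := by simpa using hprod_int k 0 4
      have hrest3 : Integrable (fun ω => 4*(M k ω * Δ k ω ^ 3) + Δ k ω ^ 4) P := by
        exact (i13.const_mul 4).add i04
      have hrest2 : Integrable (fun ω => 6*(M k ω ^ 2 * Δ k ω ^ 2) + (4*(M k ω * Δ k ω ^ 3) + Δ k ω ^ 4)) P := by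
        exact (i22.const_mul 6).add hrest3
      have hrest1 : Integrable (fun ω => 4*(M k ω ^ 3 * Δ k ω) + (6*(M k ω ^ 2 * Δ k ω ^ 2) + (4*(M k ω * Δ k ω ^ 3) + Δ k ω ^ 4))) P := by
        exact (i31.const_mul 4).add hrest2
      have hexp : ∀ ω, M (k+1) ω ^ 4 = M k ω ^ 4 +
          (4*(M k ω ^ 3 * Δ k ω) + (6*(M k ω ^ 2 * Δ k ω ^ 2) + (4*(M k ω * Δ k ω ^ 3) + Δ k ω ^ 4))) := by
        intro ω; rw [hMsucc]; ring
      have horth3 : ∫ ω, M k ω ^ 3 * Δ k ω ∂P = 0 := by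
        refine horth k (fun ω => M k ω ^ 3) ((c*k)^3) ((hMsmF k).pow 3) ?_
        filter_upwards [hMbdd k] with ω h
        rw [abs_pow]
        exact pow_le_pow_left₀ (abs_nonneg _) h 3
      have hb22 : ∫ ω, M k ω ^ 2 * Δ k ω ^ 2 ∂P ≤ c^2 * (c^2 * k) := by
        have hmono : ∀ᵐ ω ∂P, M k ω ^ 2 * Δ k ω ^ 2 ≤ M k ω ^ 2 * c^2 := by
          filter_upwards [hbdd k] with ω h
          have h2 : Δ k ω ^ 2 ≤ c^2 := by
            calc Δ k ω ^ 2 = |Δ k ω| ^ 2 := (sq_abs _).symm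
            _ ≤ c^2 := pow_le_pow_left₀ (abs_nonneg _) h 2
          exact mul_le_mul_of_nonneg_left h2 (sq_nonneg _)
        calc ∫ ω, M k ω ^ 2 * Δ k ω ^ 2 ∂P ≤ ∫ ω, M k ω ^ 2 * c^2 ∂P :=
              integral_mono_ae i22 (im2.mul_const _) hmono
        _ = (∫ ω, M k ω ^ 2 ∂P) * c^2 := integral_mul_const _ _
        _ ≤ (c^2 * k) * c^2 := mul_le_mul_of_nonneg_right (he2 k) (sq_nonneg c)
        _ = c^2 * (c^2 * k) := by ring
      have hb13 : ∫ ω, M k ω * Δ k ω ^ 3 ∂P ≤ (1 + c^2 * k) * c^3 := by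
        have hmono : ∀ᵐ ω ∂P, M k ω * Δ k ω ^ 3 ≤ (1 + M k ω ^ 2) * c^3 := by
          filter_upwards [hbdd k] with ω h
          have h1 : M k ω * Δ k ω ^ 3 ≤ |M k ω| * |Δ k ω| ^ 3 := by
            calc M k ω * Δ k ω ^ 3 ≤ |M k ω * Δ k ω ^ 3| := le_abs_self _
            _ = |M k ω| * |Δ k ω| ^ 3 := by rw [abs_mul, abs_pow]
          have h2 : |Δ k ω| ^ 3 ≤ c^3 := pow_le_pow_left₀ (abs_nonneg _) h 3
          have h3 : |M k ω| ≤ 1 + M k ω ^ 2 := by nlinarith [sq_nonneg (|M k ω| - 1), sq_abs (M k ω)]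
          have h4 : |M k ω| * |Δ k ω| ^ 3 ≤ (1 + M k ω ^ 2) * c^3 :=
            mul_le_mul h3 h2 (by positivity) (by nlinarith [sq_nonneg (M k ω)])
          linarith
        have hint : Integrable (fun ω => (1 + M k ω ^ 2) * c^3) P := by
          exact ((integrable_const 1).add im2).mul_const _
        calc ∫ ω, M k ω * Δ k ω ^ 3 ∂P ≤ ∫ ω, (1 + M k ω ^ 2) * c^3 ∂P :=
              integral_mono_ae i13 hint hmono
        _ = (∫ ω, (1 + M k ω ^ 2) ∂P) * c^3 := integral_mul_const _ _
        _ = (1 + ∫ ω, M k ω ^ 2 ∂P) * c^3 := by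
              rw [integral_add (integrable_const 1) im2]; simp
        _ ≤ (1 + c^2 * k) * c^3 := by
              apply mul_le_mul_of_nonneg_right _ (by positivity)
              linarith [he2 k]
      have hb04 : ∫ ω, Δ k ω ^ 4 ∂P ≤ c^4 := by
        have hmono : ∀ᵐ ω ∂P, Δ k ω ^ 4 ≤ c^4 := by
          filter_upwards [hbdd k] with ω h
          calc Δ k ω ^ 4 = |Δ k ω| ^ 4 := by rw [← abs_pow, abs_of_nonneg (by positivity)]
          _ ≤ c^4 := pow_le_pow_left₀ (abs_nonneg _) h 4
        calc ∫ ω, Δ k ω ^ 4 ∂P ≤ ∫ _ω, c^4 ∂P := integral_mono_ae i04 (integrable_const _) hmono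
        _ = c^4 := by simp
      have hsplit : ∫ ω, M (k+1) ω ^ 4 ∂P = (∫ ω, M k ω ^ 4 ∂P) +
          (4 * ∫ ω, M k ω ^ 3 * Δ k ω ∂P + (6 * ∫ ω, M k ω ^ 2 * Δ k ω ^ 2 ∂P +
          (4 * ∫ ω, M k ω * Δ k ω ^ 3 ∂P + ∫ ω, Δ k ω ^ 4 ∂P))) := by
        calc ∫ ω, M (k+1) ω ^ 4 ∂P
            = ∫ ω, (M k ω ^ 4 + (4*(M k ω ^ 3 * Δ k ω) + (6*(M k ω ^ 2 * Δ k ω ^ 2) +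
              (4*(M k ω * Δ k ω ^ 3) + Δ k ω ^ 4)))) ∂P :=
              integral_congr_ae (Eventually.of_forall hexp)
          _ = _ := by
              rw [integral_add im4 hrest1, integral_add (i31.const_mul 4) hrest2,
                integral_add (i22.const_mul 6) hrest3, integral_add (i13.const_mul 4) i04,
                integral_const_mul, integral_const_mul, integral_const_mul]
      rw [hsplit, horth3]
      have hkn : (0:ℝ) ≤ (k:ℝ) := Nat.cast_nonneg k
      have hq1 : (6*c^4 + 4*c^5) * (k:ℝ) ≤ D * k := mul_le_mul_of_nonneg_right hD1 hkn
      have hring : D * (((k+1:ℕ):ℝ)+1)^2 = D * (((k:ℝ)+1))^2 + (2*(D*(k:ℝ)) + 3*D) := by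
        push_cast; ring
      rw [hring]
      nlinarith [ih, hb22, hb13, hb04]
  have key : ∀ j : ℕ, ∀ᵐ ω ∂P, ∀ᶠ n : ℕ in atTop, |M n ω| < (1/((j:ℝ)+1)) * n := by
    intro j
    obtain ⟨ε, hεdef⟩ : ∃ ε : ℝ, ε = 1/((j:ℝ)+1) := ⟨_, rfl⟩
    have hε : 0 < ε := by rw [hεdef]; positivity
    have cheb : ∀ n : ℕ, 1 ≤ n →
        P {ω | ε * n ≤ |M n ω|} ≤ ENNReal.ofReal (D*((n:ℝ)+1)^2/(ε*n)^4) := by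
      intro n hn1
      have hnpos : (0:ℝ) < n := by exact_mod_cast hn1
      have ht : (0:ℝ) < (ε*(n:ℝ))^4 := by positivity
      have im4n : Integrable (fun ω => M n ω ^ 4) P := by simpa using hprod_int n 4 0
      have hsub : {ω | ε*(n:ℝ) ≤ |M n ω|} ⊆ {ω | (ε*(n:ℝ))^4 ≤ (fun ω => M n ω ^ 4) ω} := by
        intro ω h
        simp only [Set.mem_setOf_eq] at h ⊢
        calc (ε*(n:ℝ))^4 ≤ |M n ω|^4 := pow_le_pow_left₀ (by positivity) h 4
        _ = M n ω ^ 4 := by rw [← abs_pow, abs_of_nonneg (by positivity)]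
      have hmark := mul_meas_ge_le_integral_of_nonneg
        (ae_of_all P fun ω => (by positivity : (0:ℝ) ≤ M n ω ^ 4)) im4n ((ε*(n:ℝ))^4)
      have htR : (P {ω | ε*(n:ℝ) ≤ |M n ω|}).toReal ≤ D*((n:ℝ)+1)^2/(ε*(n:ℝ))^4 := by
        have h1 : (P {ω | ε*(n:ℝ) ≤ |M n ω|}).toReal ≤
            (P {ω | (ε*(n:ℝ))^4 ≤ (fun ω => M n ω ^ 4) ω}).toReal :=
          ENNReal.toReal_mono (measure_ne_top _ _) (measure_mono hsub)
        have h2 : (P {ω | (ε*(n:ℝ))^4 ≤ (fun ω => M n ω ^ 4) ω}).toReal ≤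
            D*((n:ℝ)+1)^2/(ε*(n:ℝ))^4 := by
          rw [le_div_iff₀ ht]
          calc (P _).toReal * (ε*(n:ℝ))^4 = (ε*(n:ℝ))^4 * (P _).toReal := by ring
          _ ≤ ∫ ω, M n ω ^ 4 ∂P := hmark
          _ ≤ D*((n:ℝ)+1)^2 := he4 n
        linarith
      rw [← ENNReal.ofReal_toReal (measure_ne_top P _)]
      exact ENNReal.ofReal_le_ofReal htR
    obtain ⟨b, hbdef⟩ : ∃ b : ℕ → ℝ, b = fun i => D*(((i+1:ℕ):ℝ)+1)^2/(ε*((i+1:ℕ):ℝ))^4 :=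
      ⟨_, rfl⟩
    have hbnn : ∀ i, 0 ≤ b i := by
      intro i; rw [hbdef]
      positivity
    have hbsummable : Summable b := by
      apply Summable.of_nonneg_of_le hbnn
        (f := fun i => (4*D/ε^4) * (1/(((i+1:ℕ)):ℝ)^2))
      · intro i
        obtain ⟨x, hxdef⟩ : ∃ x : ℝ, x = ((i+1:ℕ):ℝ) := ⟨_, rfl⟩
        have hx : (1:ℝ) ≤ x := by rw [hxdef]; exact_mod_cast Nat.one_le_iff_ne_zero.mpr (by omega)
        have hx0 : (0:ℝ) < x := by linarith
        rw [hbdef]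
        simp only [← hxdef]
        rw [div_le_iff₀ (by positivity : (0:ℝ) < (ε*x)^4)]
        have hre : (4*D/ε^4)*(1/x^2)*(ε*x)^4 = 4*D*x^2 := by
          field_simp
        rw [hre]
        have h5 : 0 ≤ 3*x^2 - 2*x - 1 := by nlinarith
        nlinarith [mul_nonneg hD0.le h5]
      · apply Summable.mul_left
        exact (summable_nat_add_iff 1).mpr (Real.summable_one_div_nat_pow.mpr one_lt_two)
    obtain ⟨s, hsdef⟩ : ∃ s : ℕ → Set Ω, s = fun i => {ω | ε * ((i+1:ℕ):ℝ) ≤ |M (i+1) ω|} :=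
      ⟨_, rfl⟩
    have hsum : ∑' i, P (s i) ≠ ⊤ := by
      have h1 : ∑' i, P (s i) ≤ ∑' i, ENNReal.ofReal (b i) := by
        apply ENNReal.tsum_le_tsum
        intro i
        rw [hsdef, hbdef]
        exact cheb (i+1) (by omega)
      have h2 : ∑' i, ENNReal.ofReal (b i) = ENNReal.ofReal (∑' i, b i) :=
        (ENNReal.ofReal_tsum_of_nonneg hbnn hbsummable).symm
      rw [h2] at h1
      exact ne_top_of_le_ne_top ENNReal.ofReal_ne_top h1
    filter_upwards [ae_eventually_notMem hsum] with ω hω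
    obtain ⟨N, hN⟩ := hω.exists_forall_of_atTop
    rw [eventually_atTop]
    refine ⟨N + 1, fun n hn => ?_⟩
    obtain ⟨i, rfl⟩ : ∃ i, n = i + 1 := ⟨n - 1, by omega⟩
    have h1 := hN i (by omega)
    rw [hsdef] at h1
    simp only [Set.mem_setOf_eq, not_le] at h1
    rw [hεdef] at h1
    exact h1
  have hae := ae_all_iff.mpr key
  filter_upwards [hae] with ω hω
  rw [Metric.tendsto_atTop]
  intro εr hεr
  obtain ⟨j, hj⟩ := exists_nat_one_div_lt hεr
  obtain ⟨N, hN⟩ := (hω j).exists_forall_of_atTop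
  refine ⟨max N 1, fun n hn => ?_⟩
  have h1 := hN n (le_trans (le_max_left _ _) hn)
  have hn1 : 1 ≤ n := le_trans (le_max_right _ _) hn
  have hnpos : (0:ℝ) < n := by exact_mod_cast hn1
  rw [Real.dist_eq, sub_zero, abs_div, abs_of_pos hnpos, div_lt_iff₀ hnpos]
  have h2 : (1/((j:ℝ)+1)) * n < εr * n := by
    apply mul_lt_mul_of_pos_right _ hnpos
    exact_mod_cast hj
  linarith

lemma final_glue {Ω : Type*} {m0 : MeasurableSpace Ω} (P : Measure Ω) [IsProbabilityMeasure P]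
    (ℱ : Filtration ℕ m0) (R d : ℕ → Ω → ℝ) (c C K κ l : ℝ)
    (hl : 0 < l) (hc : 0 < c) (hC0 : 0 ≤ C) (hK0 : 0 ≤ K) (hKκ : K < κ)
    (hRmeasF : ∀ n, Measurable[ℱ n] (R n)) (hdmeasF : ∀ n, Measurable[ℱ n] (d n))
    (hRint : ∀ n, Integrable (R n) P) (hdint : ∀ n, Integrable (d n) P)
    (hdbd : ∀ n ω, |d n ω| ≤ c/2) (hRdiffbd : ∀ n, ∀ᵐ ω ∂P, |R (n+1) ω - R n ω| ≤ c/2)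
    (hRl : ∀ n ω, l ≤ R n ω)
    (hdrift : ∀ n, P[fun ω => R (n+1) ω - R n ω | ℱ n] =ᵐ[P] d n)
    (E : Ω → Prop)
    (hdK : ∀ ω, E ω → ∀ n, d n ω ≤ K + C / R n ω) :
    ∀ᵐ ω ∂P, E ω → Filter.limsup (fun n : ℕ => R n ω / (n:ℝ)) atTop < κ := by
  obtain ⟨Δ, hΔdef⟩ : ∃ Δ : ℕ → Ω → ℝ, Δ = fun n ω => R (n+1) ω - R n ω - d n ω := ⟨_, rfl⟩
  have hadp : ∀ n, StronglyMeasurable[ℱ (n+1)] (Δ n) := by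
    intro n
    rw [hΔdef]
    exact (((hRmeasF (n+1)).sub ((hRmeasF n).mono (ℱ.mono (Nat.le_succ n)) le_rfl)).sub
      ((hdmeasF n).mono (ℱ.mono (Nat.le_succ n)) le_rfl)).stronglyMeasurable
  have hbddΔ : ∀ n, ∀ᵐ ω ∂P, |Δ n ω| ≤ c := by
    intro n
    filter_upwards [hRdiffbd n] with ω h1
    rw [hΔdef]
    calc |R (n+1) ω - R n ω - d n ω| ≤ |R (n+1) ω - R n ω| + |d n ω| := abs_sub _ _
    _ ≤ c/2 + c/2 := add_le_add h1 (hdbd n ω)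
    _ = c := by ring
  have hcondΔ : ∀ n, P[Δ n | ℱ n] =ᵐ[P] 0 := by
    intro n
    have hdiffint : Integrable (fun ω => R (n+1) ω - R n ω) P := (hRint (n+1)).sub (hRint n)
    have h1 : P[Δ n | ℱ n] =ᵐ[P]
        P[fun ω => R (n+1) ω - R n ω | ℱ n] - P[d n | ℱ n] := by
      rw [hΔdef]
      exact condExp_sub hdiffint (hdint n) _
    have h2 : P[d n | ℱ n] = d n :=
      condExp_of_stronglyMeasurable (ℱ.le n) (hdmeasF n).stronglyMeasurable (hdint n)
    filter_upwards [h1, hdrift n] with ω e1 e2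
    rw [e1]
    simp only [Pi.sub_apply, h2, e2, Pi.zero_apply, sub_self]
  have hMae := mart_slln P ℱ Δ c hc hadp hbddΔ hcondΔ
  filter_upwards [hMae, ae_all_iff.mpr hRdiffbd] with ω h1 h2
  intro hE
  refine lt_of_le_of_lt (det_limsup (M := fun n => ∑ k ∈ Finset.range n, Δ k ω)
    (d := fun n => d n ω) hl hc hC0 hK0 (fun n => hRl n ω) ?_ ?_ (hdK ω hE) h1) hKκ
  · intro n
    calc |R (n+1) ω - R n ω| ≤ c/2 := h2 n
    _ ≤ c := by linarith
  · intro n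
    show R (n+1) ω - R n ω =
      ((∑ k ∈ Finset.range (n+1), Δ k ω) - ∑ k ∈ Finset.range n, Δ k ω) + d n ω
    rw [Finset.sum_range_succ, hΔdef]
    ring


set_option maxHeartbeats 2000000 in
/-- Proposition on the upper bound for `Rₙ`. For the discrete-time
competition process with linear interaction, if `α₁ ≥ α₂` and `α₁α₂ > β₁β₂`, then almost
surely on the event `{τ = ∞}`, `limsup_{n→∞} Rₙ/n < α₁ + rβ₂`, where
`Rₙ = (α₁+β₂)ζ₁(n) + (α₂+β₁)ζ₂(n) + λ₁ + λ₂` and `r` is the positive root of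
`β₂r² + (α₁ − α₂)r − β₁ = 0`. -/
theorem stmt_8
    {Ω : Type*} {m0 : MeasurableSpace Ω} (P : Measure Ω) [IsProbabilityMeasure P]
    (ℱ : Filtration ℕ m0)
    (l₁ l₂ β₁ β₂ α₁ α₂ : ℝ)
    (hl₁ : 0 < l₁) (hl₂ : 0 < l₂) (hβ₁ : 0 < β₁) (hβ₂ : 0 < β₂)
    (hα₁ : 0 ≤ α₁) (hα₂ : 0 ≤ α₂)
    (ζ₁ ζ₂ : ℕ → Ω → ℕ)
    (hζ₁meas : ∀ n, Measurable[ℱ n] (ζ₁ n)) (hζ₂meas : ∀ n, Measurable[ℱ n] (ζ₂ n))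
    (x₀ y₀ : ℕ) (hinit : ∀ ω, ζ₁ 0 ω = x₀ ∧ ζ₂ 0 ω = y₀)
    (hstep : ∀ n, ∀ᵐ ω ∂P,
      (ζ₁ (n + 1) ω = ζ₁ n ω + 1 ∧ ζ₂ (n + 1) ω = ζ₂ n ω) ∨
      (ζ₁ (n + 1) ω = ζ₁ n ω ∧ ζ₂ (n + 1) ω = ζ₂ n ω + 1) ∨
      (ζ₁ (n + 1) ω + 1 = ζ₁ n ω ∧ ζ₂ (n + 1) ω = ζ₂ n ω) ∨
      (ζ₁ (n + 1) ω = ζ₁ n ω ∧ ζ₂ (n + 1) ω + 1 = ζ₂ n ω))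
    (W : ℕ → Ω → ℝ)
    (hW : ∀ n ω, W n ω =
      (l₁ + α₁ * (ζ₁ n ω : ℝ)) + (l₂ + α₂ * (ζ₂ n ω : ℝ)) +
      (if 1 ≤ ζ₁ n ω then β₁ * (ζ₂ n ω : ℝ) else 0) +
      (if 1 ≤ ζ₂ n ω then β₂ * (ζ₁ n ω : ℝ) else 0))
    (hright : ∀ n,
      P[({ω' | ζ₁ (n + 1) ω' = ζ₁ n ω' + 1 ∧ ζ₂ (n + 1) ω' = ζ₂ n ω'} : Set Ω).indicator
          (fun _ => (1 : ℝ)) | ℱ n]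
        =ᵐ[P] fun ω => (l₁ + α₁ * (ζ₁ n ω : ℝ)) / W n ω)
    (hupp : ∀ n,
      P[({ω' | ζ₁ (n + 1) ω' = ζ₁ n ω' ∧ ζ₂ (n + 1) ω' = ζ₂ n ω' + 1} : Set Ω).indicator
          (fun _ => (1 : ℝ)) | ℱ n]
        =ᵐ[P] fun ω => (l₂ + α₂ * (ζ₂ n ω : ℝ)) / W n ω)
    (hleft : ∀ n,
      P[({ω' | ζ₁ (n + 1) ω' + 1 = ζ₁ n ω' ∧ ζ₂ (n + 1) ω' = ζ₂ n ω'} : Set Ω).indicator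
          (fun _ => (1 : ℝ)) | ℱ n]
        =ᵐ[P] fun ω => (if 1 ≤ ζ₁ n ω then β₁ * (ζ₂ n ω : ℝ) else 0) / W n ω)
    (hdownp : ∀ n,
      P[({ω' | ζ₁ (n + 1) ω' = ζ₁ n ω' ∧ ζ₂ (n + 1) ω' + 1 = ζ₂ n ω'} : Set Ω).indicator
          (fun _ => (1 : ℝ)) | ℱ n]
        =ᵐ[P] fun ω => (if 1 ≤ ζ₂ n ω then β₂ * (ζ₁ n ω : ℝ) else 0) / W n ω)
    (ha12 : α₂ ≤ α₁) (hab : β₁ * β₂ < α₁ * α₂)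
    (r : ℝ) (hr : r = (-(α₁ - α₂) + Real.sqrt ((α₁ - α₂) ^ 2 + 4 * β₁ * β₂)) / (2 * β₂))
    (R : ℕ → Ω → ℝ)
    (hR : ∀ n ω, R n ω = (α₁ + β₂) * (ζ₁ n ω : ℝ) + (α₂ + β₁) * (ζ₂ n ω : ℝ) + l₁ + l₂) :
    ∀ᵐ ω ∂P, (∀ n, ζ₁ n ω ≠ 0 ∧ ζ₂ n ω ≠ 0) →
      Filter.limsup (fun n : ℕ => R n ω / (n : ℝ)) atTop < α₁ + r * β₂ := by
  have hp : 0 < α₁ + β₂ := by linarith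
  have hq : 0 < α₂ + β₁ := by linarith
  -- target constant bound
  obtain ⟨K, hKdef⟩ : ∃ K : ℝ, K = max (max
      (((α₁+β₂)*α₁ - (α₂+β₁)*β₂)/(α₁+β₂)) (((α₂+β₁)*α₂ - (α₁+β₂)*β₁)/(α₂+β₁))) 0 := ⟨_, rfl⟩
  have hK0 : 0 ≤ K := hKdef ▸ le_max_right _ _
  have hr0 : 0 ≤ r := by
    rw [hr]
    apply div_nonneg _ (by positivity)
    have h1 : Real.sqrt ((α₁ - α₂) ^ 2) ≤ Real.sqrt ((α₁ - α₂) ^ 2 + 4 * β₁ * β₂) :=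
      Real.sqrt_le_sqrt (by nlinarith)
    rw [Real.sqrt_sq_eq_abs] at h1
    have h2 := le_abs_self (α₁ - α₂)
    linarith
  have hα₁pos : 0 < α₁ := by
    rcases lt_or_ge 0 α₁ with h | h
    · exact h
    · exfalso
      have e1 : α₁ = 0 := le_antisymm h hα₁
      have e2 : α₂ = 0 := le_antisymm (e1 ▸ ha12) hα₂
      rw [e1, e2] at hab
      nlinarith [mul_pos hβ₁ hβ₂]
  have hKlt : K < α₁ + r * β₂ := by
    have htarget : 0 < α₁ + r * β₂ := by nlinarith [mul_nonneg hr0 hβ₂.le]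
    have h1 : ((α₁+β₂)*α₁ - (α₂+β₁)*β₂)/(α₁+β₂) < α₁ + r * β₂ := by
      rw [div_lt_iff₀ hp]
      nlinarith [mul_pos hq hβ₂, mul_nonneg (mul_nonneg hr0 hβ₂.le) hp.le]
    have h2 : ((α₂+β₁)*α₂ - (α₁+β₂)*β₁)/(α₂+β₁) < α₁ + r * β₂ := by
      rw [div_lt_iff₀ hq]
      nlinarith [mul_pos hp hβ₁, mul_nonneg (mul_nonneg hr0 hβ₂.le) hq.le]
    rw [hKdef]
    exact max_lt (max_lt h1 h2) htarget
  -- positivity of W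
  have hWge : ∀ n ω, l₁ + l₂ ≤ W n ω := by
    intro n ω
    rw [hW]
    have h1 : (0:ℝ) ≤ α₁ * (ζ₁ n ω : ℝ) := by positivity
    have h2 : (0:ℝ) ≤ α₂ * (ζ₂ n ω : ℝ) := by positivity
    have h3 : (0:ℝ) ≤ (if 1 ≤ ζ₁ n ω then β₁ * (ζ₂ n ω : ℝ) else 0) := by
      split_ifs
      · positivity
      · exact le_rfl
    have h4 : (0:ℝ) ≤ (if 1 ≤ ζ₂ n ω then β₂ * (ζ₁ n ω : ℝ) else 0) := by
      split_ifs
      · positivity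
      · exact le_rfl
    linarith
  have hWpos : ∀ n ω, 0 < W n ω := fun n ω => lt_of_lt_of_le (by linarith) (hWge n ω)
  -- the drift function
  obtain ⟨d, hddef⟩ : ∃ d : ℕ → Ω → ℝ, d = fun n ω =>
      (α₁+β₂) * ((l₁ + α₁ * (ζ₁ n ω : ℝ)) / W n ω) -
      (α₁+β₂) * ((if 1 ≤ ζ₁ n ω then β₁ * (ζ₂ n ω : ℝ) else 0) / W n ω) +
      ((α₂+β₁) * ((l₂ + α₂ * (ζ₂ n ω : ℝ)) / W n ω) -
      (α₂+β₁) * ((if 1 ≤ ζ₂ n ω then β₂ * (ζ₁ n ω : ℝ) else 0) / W n ω)) := ⟨_, rfl⟩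
  -- measurability
  have hx1 : ∀ n, Measurable[ℱ n] (fun ω => ((ζ₁ n ω : ℕ) : ℝ)) :=
    fun n => measurable_from_top.comp (hζ₁meas n)
  have hx2 : ∀ n, Measurable[ℱ n] (fun ω => ((ζ₂ n ω : ℕ) : ℝ)) :=
    fun n => measurable_from_top.comp (hζ₂meas n)
  have hs1 : ∀ n, MeasurableSet[ℱ n] {ω | 1 ≤ ζ₁ n ω} :=
    fun n => (hζ₁meas n) (show MeasurableSet (Set.Ici 1) from trivial)
  have hs2 : ∀ n, MeasurableSet[ℱ n] {ω | 1 ≤ ζ₂ n ω} :=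
    fun n => (hζ₂meas n) (show MeasurableSet (Set.Ici 1) from trivial)
  have hI1meas : ∀ n, Measurable[ℱ n] (fun ω => (if 1 ≤ ζ₁ n ω then β₁ * (ζ₂ n ω : ℝ) else 0)) :=
    fun n => Measurable.ite (hs1 n) (measurable_const.mul (hx2 n)) measurable_const
  have hI2meas : ∀ n, Measurable[ℱ n] (fun ω => (if 1 ≤ ζ₂ n ω then β₂ * (ζ₁ n ω : ℝ) else 0)) :=
    fun n => Measurable.ite (hs2 n) (measurable_const.mul (hx1 n)) measurable_const
  have hWmeasF : ∀ n, Measurable[ℱ n] (W n) := by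
    intro n
    have : W n = fun ω =>
        (l₁ + α₁ * (ζ₁ n ω : ℝ)) + (l₂ + α₂ * (ζ₂ n ω : ℝ)) +
        (if 1 ≤ ζ₁ n ω then β₁ * (ζ₂ n ω : ℝ) else 0) +
        (if 1 ≤ ζ₂ n ω then β₂ * (ζ₁ n ω : ℝ) else 0) := funext (hW n)
    rw [this]
    exact (((measurable_const.add ((measurable_const.mul (hx1 n)))).add
      (measurable_const.add (measurable_const.mul (hx2 n)))).add (hI1meas n)).add (hI2meas n)
  have hRmeasF : ∀ n, Measurable[ℱ n] (R n) := by
    intro n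
    have : R n = fun ω => (α₁ + β₂) * (ζ₁ n ω : ℝ) + (α₂ + β₁) * (ζ₂ n ω : ℝ) + l₁ + l₂ :=
      funext (hR n)
    rw [this]
    exact (((measurable_const.mul (hx1 n)).add (measurable_const.mul (hx2 n))).add
      measurable_const).add measurable_const
  have hdmeasF : ∀ n, Measurable[ℱ n] (d n) := by
    intro n
    rw [hddef]
    exact ((measurable_const.mul ((measurable_const.add
        (measurable_const.mul (hx1 n))).div (hWmeasF n))).sub
      (measurable_const.mul ((hI1meas n).div (hWmeasF n)))).add
      ((measurable_const.mul ((measurable_const.add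
        (measurable_const.mul (hx2 n))).div (hWmeasF n))).sub
      (measurable_const.mul ((hI2meas n).div (hWmeasF n))))
  -- bound on d
  have hdbd : ∀ n ω, |d n ω| ≤ (α₁+β₂) + (α₂+β₁) := by
    intro n ω
    have hWp := hWpos n ω
    have hfrac : ∀ N : ℝ, 0 ≤ N → N ≤ W n ω → 0 ≤ N / W n ω ∧ N / W n ω ≤ 1 :=
      fun N h1 h2 => ⟨div_nonneg h1 hWp.le, (div_le_one hWp).mpr h2⟩
    have hI1nn : (0:ℝ) ≤ (if 1 ≤ ζ₁ n ω then β₁ * (ζ₂ n ω : ℝ) else 0) := by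
      split_ifs
      · positivity
      · exact le_rfl
    have hI2nn : (0:ℝ) ≤ (if 1 ≤ ζ₂ n ω then β₂ * (ζ₁ n ω : ℝ) else 0) := by
      split_ifs
      · positivity
      · exact le_rfl
    have hAnn : (0:ℝ) ≤ l₁ + α₁ * (ζ₁ n ω : ℝ) := by positivity
    have hBnn : (0:ℝ) ≤ l₂ + α₂ * (ζ₂ n ω : ℝ) := by positivity
    have hAle : l₁ + α₁ * (ζ₁ n ω : ℝ) ≤ W n ω := by rw [hW]; linarith
    have hBle : l₂ + α₂ * (ζ₂ n ω : ℝ) ≤ W n ω := by rw [hW]; linarith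
    have hI1le : (if 1 ≤ ζ₁ n ω then β₁ * (ζ₂ n ω : ℝ) else 0) ≤ W n ω := by rw [hW]; linarith
    have hI2le : (if 1 ≤ ζ₂ n ω then β₂ * (ζ₁ n ω : ℝ) else 0) ≤ W n ω := by rw [hW]; linarith
    obtain ⟨hA0, hA1⟩ := hfrac _ hAnn hAle
    obtain ⟨hB0, hB1⟩ := hfrac _ hBnn hBle
    obtain ⟨hi10, hi11⟩ := hfrac _ hI1nn hI1le
    obtain ⟨hi20, hi21⟩ := hfrac _ hI2nn hI2le
    rw [hddef, abs_le]
    constructor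
    · simp only
      nlinarith [mul_le_mul_of_nonneg_left hA1 hp.le, mul_le_mul_of_nonneg_left hB1 hq.le,
        mul_le_mul_of_nonneg_left hi11 hp.le, mul_le_mul_of_nonneg_left hi21 hq.le,
        mul_nonneg hp.le hA0, mul_nonneg hq.le hB0, mul_nonneg hp.le hi10,
        mul_nonneg hq.le hi20]
    · simp only
      nlinarith [mul_le_mul_of_nonneg_left hA1 hp.le, mul_le_mul_of_nonneg_left hB1 hq.le,
        mul_le_mul_of_nonneg_left hi11 hp.le, mul_le_mul_of_nonneg_left hi21 hq.le,
        mul_nonneg hp.le hA0, mul_nonneg hq.le hB0, mul_nonneg hp.le hi10,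
        mul_nonneg hq.le hi20]
  -- a.s. bound on R increments
  have hRdiff : ∀ n, ∀ᵐ ω ∂P, |R (n+1) ω - R n ω| ≤ (α₁+β₂) + (α₂+β₁) := by
    intro n
    filter_upwards [hstep n] with ω h
    rcases h with ⟨h1, h2⟩ | ⟨h1, h2⟩ | ⟨h1, h2⟩ | ⟨h1, h2⟩
    · have e1 : ((ζ₁ (n+1) ω : ℕ) : ℝ) = (ζ₁ n ω : ℝ) + 1 := by exact_mod_cast h1
      have e2 : ((ζ₂ (n+1) ω : ℕ) : ℝ) = (ζ₂ n ω : ℝ) := by exact_mod_cast h2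
      rw [hR, hR, e1, e2]
      have he : (α₁ + β₂) * ((ζ₁ n ω : ℝ) + 1) + (α₂ + β₁) * (ζ₂ n ω : ℝ) + l₁ + l₂ -
          ((α₁ + β₂) * (ζ₁ n ω : ℝ) + (α₂ + β₁) * (ζ₂ n ω : ℝ) + l₁ + l₂) = α₁ + β₂ := by ring
      rw [he, abs_of_nonneg hp.le]
      linarith
    · have e1 : ((ζ₁ (n+1) ω : ℕ) : ℝ) = (ζ₁ n ω : ℝ) := by exact_mod_cast h1
      have e2 : ((ζ₂ (n+1) ω : ℕ) : ℝ) = (ζ₂ n ω : ℝ) + 1 := by exact_mod_cast h2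
      rw [hR, hR, e1, e2]
      have he : (α₁ + β₂) * (ζ₁ n ω : ℝ) + (α₂ + β₁) * ((ζ₂ n ω : ℝ) + 1) + l₁ + l₂ -
          ((α₁ + β₂) * (ζ₁ n ω : ℝ) + (α₂ + β₁) * (ζ₂ n ω : ℝ) + l₁ + l₂) = α₂ + β₁ := by ring
      rw [he, abs_of_nonneg hq.le]
      linarith
    · have e1 : ((ζ₁ (n+1) ω : ℕ) : ℝ) = (ζ₁ n ω : ℝ) - 1 := by
        have : ((ζ₁ (n+1) ω : ℕ) : ℝ) + 1 = (ζ₁ n ω : ℝ) := by exact_mod_cast h1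
        linarith
      have e2 : ((ζ₂ (n+1) ω : ℕ) : ℝ) = (ζ₂ n ω : ℝ) := by exact_mod_cast h2
      rw [hR, hR, e1, e2]
      have he : (α₁ + β₂) * ((ζ₁ n ω : ℝ) - 1) + (α₂ + β₁) * (ζ₂ n ω : ℝ) + l₁ + l₂ -
          ((α₁ + β₂) * (ζ₁ n ω : ℝ) + (α₂ + β₁) * (ζ₂ n ω : ℝ) + l₁ + l₂) = -(α₁ + β₂) := by ring
      rw [he, abs_neg, abs_of_nonneg hp.le]
      linarith
    · have e1 : ((ζ₁ (n+1) ω : ℕ) : ℝ) = (ζ₁ n ω : ℝ) := by exact_mod_cast h1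
      have e2 : ((ζ₂ (n+1) ω : ℕ) : ℝ) = (ζ₂ n ω : ℝ) - 1 := by
        have : ((ζ₂ (n+1) ω : ℕ) : ℝ) + 1 = (ζ₂ n ω : ℝ) := by exact_mod_cast h2
        linarith
      rw [hR, hR, e1, e2]
      have he : (α₁ + β₂) * (ζ₁ n ω : ℝ) + (α₂ + β₁) * ((ζ₂ n ω : ℝ) - 1) + l₁ + l₂ -
          ((α₁ + β₂) * (ζ₁ n ω : ℝ) + (α₂ + β₁) * (ζ₂ n ω : ℝ) + l₁ + l₂) = -(α₂ + β₁) := by ring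
      rw [he, abs_neg, abs_of_nonneg hq.le]
      linarith
  -- a.s. bounds on ζ, integrability of R
  have hζbd : ∀ n, ∀ᵐ ω ∂P, ζ₁ n ω ≤ x₀ + n ∧ ζ₂ n ω ≤ y₀ + n := by
    intro n
    induction n with
    | zero =>
      apply Eventually.of_forall
      intro ω
      obtain ⟨e1, e2⟩ := hinit ω
      omega
    | succ k ih =>
      filter_upwards [ih, hstep k] with ω h1 h2
      rcases h2 with ⟨e1, e2⟩ | ⟨e1, e2⟩ | ⟨e1, e2⟩ | ⟨e1, e2⟩ <;> omega
  have hRnn : ∀ n ω, l₁ + l₂ ≤ R n ω := by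
    intro n ω
    rw [hR]
    have h1 : (0:ℝ) ≤ (α₁+β₂) * (ζ₁ n ω : ℝ) := by positivity
    have h2 : (0:ℝ) ≤ (α₂+β₁) * (ζ₂ n ω : ℝ) := by positivity
    linarith
  have hRint : ∀ n, Integrable (R n) P := by
    intro n
    apply int_bdd ((hRmeasF n).mono (ℱ.le n) le_rfl).stronglyMeasurable.aestronglyMeasurable
      (b := (α₁+β₂) * ((x₀:ℝ)+n) + (α₂+β₁) * ((y₀:ℝ)+n) + l₁ + l₂)
    filter_upwards [hζbd n] with ω h
    rw [abs_of_nonneg (by linarith [hRnn n ω]), hR]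
    have c1 : ((ζ₁ n ω : ℕ) : ℝ) ≤ (x₀:ℝ) + n := by exact_mod_cast h.1
    have c2 : ((ζ₂ n ω : ℕ) : ℝ) ≤ (y₀:ℝ) + n := by exact_mod_cast h.2
    nlinarith [mul_le_mul_of_nonneg_left c1 hp.le, mul_le_mul_of_nonneg_left c2 hq.le]
  have hdint : ∀ n, Integrable (d n) P := fun n =>
    int_bdd ((hdmeasF n).mono (ℱ.le n) le_rfl).stronglyMeasurable.aestronglyMeasurable
      (Eventually.of_forall (hdbd n))
  -- indicator integrability
  have hζ₁m0 : ∀ n, Measurable (ζ₁ n) := fun n => (hζ₁meas n).mono (ℱ.le n) le_rfl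
  have hζ₂m0 : ∀ n, Measurable (ζ₂ n) := fun n => (hζ₂meas n).mono (ℱ.le n) le_rfl
  have hSmeas₁ : ∀ n, MeasurableSet {ω' | ζ₁ (n + 1) ω' = ζ₁ n ω' + 1 ∧ ζ₂ (n + 1) ω' = ζ₂ n ω'} := by
    intro n
    exact (measurableSet_eq_fun (hζ₁m0 (n+1)) ((hζ₁m0 n).add measurable_const)).inter
      (measurableSet_eq_fun (hζ₂m0 (n+1)) (hζ₂m0 n))
  have hSmeas₂ : ∀ n, MeasurableSet {ω' | ζ₁ (n + 1) ω' = ζ₁ n ω' ∧ ζ₂ (n + 1) ω' = ζ₂ n ω' + 1} := by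
    intro n
    exact (measurableSet_eq_fun (hζ₁m0 (n+1)) (hζ₁m0 n)).inter
      (measurableSet_eq_fun (hζ₂m0 (n+1)) ((hζ₂m0 n).add measurable_const))
  have hSmeas₃ : ∀ n, MeasurableSet {ω' | ζ₁ (n + 1) ω' + 1 = ζ₁ n ω' ∧ ζ₂ (n + 1) ω' = ζ₂ n ω'} := by
    intro n
    exact (measurableSet_eq_fun ((hζ₁m0 (n+1)).add measurable_const) (hζ₁m0 n)).inter
      (measurableSet_eq_fun (hζ₂m0 (n+1)) (hζ₂m0 n))
  have hSmeas₄ : ∀ n, MeasurableSet {ω' | ζ₁ (n + 1) ω' = ζ₁ n ω' ∧ ζ₂ (n + 1) ω' + 1 = ζ₂ n ω'} := by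
    intro n
    exact (measurableSet_eq_fun (hζ₁m0 (n+1)) (hζ₁m0 n)).inter
      (measurableSet_eq_fun ((hζ₂m0 (n+1)).add measurable_const) (hζ₂m0 n))
  -- drift identity
  have hCmul : ∀ (a : ℝ) (f : Ω → ℝ) (n : ℕ),
      P[fun ω => a * f ω | ℱ n] =ᵐ[P] fun ω => a * (P[f | ℱ n]) ω := by
    intro a f n
    have h := condExp_smul (μ := P) (m := ℱ n) a f
    exact h
  have hdrift : ∀ n, P[fun ω => R (n+1) ω - R n ω | ℱ n] =ᵐ[P] d n := by
    intro n
    obtain ⟨F₁, hF₁⟩ : ∃ F : Ω → ℝ, F = ({ω' | ζ₁ (n + 1) ω' = ζ₁ n ω' + 1 ∧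
      ζ₂ (n + 1) ω' = ζ₂ n ω'} : Set Ω).indicator (fun _ => (1 : ℝ)) := ⟨_, rfl⟩
    obtain ⟨F₂, hF₂⟩ : ∃ F : Ω → ℝ, F = ({ω' | ζ₁ (n + 1) ω' = ζ₁ n ω' ∧
      ζ₂ (n + 1) ω' = ζ₂ n ω' + 1} : Set Ω).indicator (fun _ => (1 : ℝ)) := ⟨_, rfl⟩
    obtain ⟨F₃, hF₃⟩ : ∃ F : Ω → ℝ, F = ({ω' | ζ₁ (n + 1) ω' + 1 = ζ₁ n ω' ∧
      ζ₂ (n + 1) ω' = ζ₂ n ω'} : Set Ω).indicator (fun _ => (1 : ℝ)) := ⟨_, rfl⟩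
    obtain ⟨F₄, hF₄⟩ : ∃ F : Ω → ℝ, F = ({ω' | ζ₁ (n + 1) ω' = ζ₁ n ω' ∧
      ζ₂ (n + 1) ω' + 1 = ζ₂ n ω'} : Set Ω).indicator (fun _ => (1 : ℝ)) := ⟨_, rfl⟩
    have hF₁int : Integrable F₁ P := hF₁ ▸ (integrable_const (1:ℝ)).indicator (hSmeas₁ n)
    have hF₂int : Integrable F₂ P := hF₂ ▸ (integrable_const (1:ℝ)).indicator (hSmeas₂ n)
    have hF₃int : Integrable F₃ P := hF₃ ▸ (integrable_const (1:ℝ)).indicator (hSmeas₃ n)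
    have hF₄int : Integrable F₄ P := hF₄ ▸ (integrable_const (1:ℝ)).indicator (hSmeas₄ n)
    -- step A : pointwise identity a.s.
    have stepA : (fun ω => R (n+1) ω - R n ω) =ᵐ[P] fun ω =>
        ((α₁+β₂) * F₁ ω - (α₁+β₂) * F₃ ω) + ((α₂+β₁) * F₂ ω - (α₂+β₁) * F₄ ω) := by
      filter_upwards [hstep n] with ω h
      have hv₁ : F₁ ω = if (ζ₁ (n + 1) ω = ζ₁ n ω + 1 ∧ ζ₂ (n + 1) ω = ζ₂ n ω) then 1 else 0 := by
        rw [hF₁, Set.indicator_apply]; rfl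
      have hv₂ : F₂ ω = if (ζ₁ (n + 1) ω = ζ₁ n ω ∧ ζ₂ (n + 1) ω = ζ₂ n ω + 1) then 1 else 0 := by
        rw [hF₂, Set.indicator_apply]; rfl
      have hv₃ : F₃ ω = if (ζ₁ (n + 1) ω + 1 = ζ₁ n ω ∧ ζ₂ (n + 1) ω = ζ₂ n ω) then 1 else 0 := by
        rw [hF₃, Set.indicator_apply]; rfl
      have hv₄ : F₄ ω = if (ζ₁ (n + 1) ω = ζ₁ n ω ∧ ζ₂ (n + 1) ω + 1 = ζ₂ n ω) then 1 else 0 := by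
        rw [hF₄, Set.indicator_apply]; rfl
      rcases h with ⟨h1, h2⟩ | ⟨h1, h2⟩ | ⟨h1, h2⟩ | ⟨h1, h2⟩
      · rw [hv₁, hv₂, hv₃, hv₄, if_pos ⟨h1, h2⟩, if_neg (show ¬(ζ₁ (n + 1) ω + 1 = ζ₁ n ω ∧ ζ₂ (n + 1) ω = ζ₂ n ω) by omega), if_neg (show ¬(ζ₁ (n + 1) ω = ζ₁ n ω ∧ ζ₂ (n + 1) ω = ζ₂ n ω + 1) by omega),
          if_neg (show ¬(ζ₁ (n + 1) ω = ζ₁ n ω ∧ ζ₂ (n + 1) ω + 1 = ζ₂ n ω) by omega), hR, hR]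
        have e1 : ((ζ₁ (n+1) ω : ℕ) : ℝ) = (ζ₁ n ω : ℝ) + 1 := by exact_mod_cast h1
        have e2 : ((ζ₂ (n+1) ω : ℕ) : ℝ) = (ζ₂ n ω : ℝ) := by exact_mod_cast h2
        rw [e1, e2]; ring
      · rw [hv₁, hv₂, hv₃, hv₄, if_neg (show ¬(ζ₁ (n + 1) ω = ζ₁ n ω + 1 ∧ ζ₂ (n + 1) ω = ζ₂ n ω) by omega), if_neg (show ¬(ζ₁ (n + 1) ω + 1 = ζ₁ n ω ∧ ζ₂ (n + 1) ω = ζ₂ n ω) by omega), if_pos ⟨h1, h2⟩,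
          if_neg (show ¬(ζ₁ (n + 1) ω = ζ₁ n ω ∧ ζ₂ (n + 1) ω + 1 = ζ₂ n ω) by omega), hR, hR]
        have e1 : ((ζ₁ (n+1) ω : ℕ) : ℝ) = (ζ₁ n ω : ℝ) := by exact_mod_cast h1
        have e2 : ((ζ₂ (n+1) ω : ℕ) : ℝ) = (ζ₂ n ω : ℝ) + 1 := by exact_mod_cast h2
        rw [e1, e2]; ring
      · rw [hv₁, hv₂, hv₃, hv₄, if_neg (show ¬(ζ₁ (n + 1) ω = ζ₁ n ω + 1 ∧ ζ₂ (n + 1) ω = ζ₂ n ω) by omega), if_pos ⟨h1, h2⟩, if_neg (show ¬(ζ₁ (n + 1) ω = ζ₁ n ω ∧ ζ₂ (n + 1) ω = ζ₂ n ω + 1) by omega),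
          if_neg (show ¬(ζ₁ (n + 1) ω = ζ₁ n ω ∧ ζ₂ (n + 1) ω + 1 = ζ₂ n ω) by omega), hR, hR]
        have e1 : ((ζ₁ (n+1) ω : ℕ) : ℝ) = (ζ₁ n ω : ℝ) - 1 := by
          have : ((ζ₁ (n+1) ω : ℕ) : ℝ) + 1 = (ζ₁ n ω : ℝ) := by exact_mod_cast h1
          linarith
        have e2 : ((ζ₂ (n+1) ω : ℕ) : ℝ) = (ζ₂ n ω : ℝ) := by exact_mod_cast h2
        rw [e1, e2]; ring
      · rw [hv₁, hv₂, hv₃, hv₄, if_neg (show ¬(ζ₁ (n + 1) ω = ζ₁ n ω + 1 ∧ ζ₂ (n + 1) ω = ζ₂ n ω) by omega), if_neg (show ¬(ζ₁ (n + 1) ω + 1 = ζ₁ n ω ∧ ζ₂ (n + 1) ω = ζ₂ n ω) by omega), if_neg (show ¬(ζ₁ (n + 1) ω = ζ₁ n ω ∧ ζ₂ (n + 1) ω = ζ₂ n ω + 1) by omega),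
          if_pos ⟨h1, h2⟩, hR, hR]
        have e1 : ((ζ₁ (n+1) ω : ℕ) : ℝ) = (ζ₁ n ω : ℝ) := by exact_mod_cast h1
        have e2 : ((ζ₂ (n+1) ω : ℕ) : ℝ) = (ζ₂ n ω : ℝ) - 1 := by
          have : ((ζ₂ (n+1) ω : ℕ) : ℝ) + 1 = (ζ₂ n ω : ℝ) := by exact_mod_cast h2
          linarith
        rw [e1, e2]; ring
    -- conditional expectations
    have c₁ := hright n
    have c₂ := hupp n
    have c₃ := hleft n
    have c₄ := hdownp n
    rw [← hF₁] at c₁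
    rw [← hF₂] at c₂
    rw [← hF₃] at c₃
    rw [← hF₄] at c₄
    have hterm1 : Integrable (fun ω => (α₁+β₂) * F₁ ω - (α₁+β₂) * F₃ ω) P := by
      exact (hF₁int.const_mul _).sub (hF₃int.const_mul _)
    have hterm2 : Integrable (fun ω => (α₂+β₁) * F₂ ω - (α₂+β₁) * F₄ ω) P := by
      exact (hF₂int.const_mul _).sub (hF₄int.const_mul _)
    calc P[fun ω => R (n+1) ω - R n ω | ℱ n]
        =ᵐ[P] P[fun ω => ((α₁+β₂) * F₁ ω - (α₁+β₂) * F₃ ω) +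
          ((α₂+β₁) * F₂ ω - (α₂+β₁) * F₄ ω) | ℱ n] := condExp_congr_ae stepA
      _ =ᵐ[P] d n := by
        have e0 : P[fun ω => ((α₁+β₂) * F₁ ω - (α₁+β₂) * F₃ ω) +
            ((α₂+β₁) * F₂ ω - (α₂+β₁) * F₄ ω) | ℱ n] =ᵐ[P]
            P[fun ω => (α₁+β₂) * F₁ ω - (α₁+β₂) * F₃ ω | ℱ n] +
            P[fun ω => (α₂+β₁) * F₂ ω - (α₂+β₁) * F₄ ω | ℱ n] :=
          condExp_add hterm1 hterm2 _
        have e1 : P[fun ω => (α₁+β₂) * F₁ ω - (α₁+β₂) * F₃ ω | ℱ n] =ᵐ[P]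
            P[fun ω => (α₁+β₂) * F₁ ω | ℱ n] - P[fun ω => (α₁+β₂) * F₃ ω | ℱ n] :=
          condExp_sub (hF₁int.const_mul _) (hF₃int.const_mul _) _
        have e2 : P[fun ω => (α₂+β₁) * F₂ ω - (α₂+β₁) * F₄ ω | ℱ n] =ᵐ[P]
            P[fun ω => (α₂+β₁) * F₂ ω | ℱ n] - P[fun ω => (α₂+β₁) * F₄ ω | ℱ n] :=
          condExp_sub (hF₂int.const_mul _) (hF₄int.const_mul _) _
        have m₁ := hCmul (α₁+β₂) F₁ n
        have m₂ := hCmul (α₂+β₁) F₂ n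
        have m₃ := hCmul (α₁+β₂) F₃ n
        have m₄ := hCmul (α₂+β₁) F₄ n
        filter_upwards [e0, e1, e2, m₁, m₂, m₃, m₄, c₁, c₂, c₃, c₄] with ω
          g0 g1 g2 g3 g4 g5 g6 g7 g8 g9 g10
        rw [g0]
        simp only [Pi.add_apply, Pi.sub_apply] at *
        rw [g1, g2, g3, g4, g5, g6, g7, g8, g9, g10, hddef]
    done
  -- final assembly
  have hdK : ∀ ω, (∀ n, ζ₁ n ω ≠ 0 ∧ ζ₂ n ω ≠ 0) → ∀ n,
      d n ω ≤ K + ((α₁+β₂)*l₁ + (α₂+β₁)*l₂) / R n ω := by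
    intro ω hE n
    have hx : 1 ≤ ζ₁ n ω := Nat.one_le_iff_ne_zero.mpr (hE n).1
    have hy : 1 ≤ ζ₂ n ω := Nat.one_le_iff_ne_zero.mpr (hE n).2
    have hRpos : 0 < R n ω := lt_of_lt_of_le (by linarith) (hRnn n ω)
    have hWR : W n ω = R n ω := by rw [hW, hR, if_pos hx, if_pos hy]; ring
    have hde : d n ω = ((α₁+β₂)*l₁ + (α₂+β₁)*l₂ +
        ((α₁+β₂)*α₁ - (α₂+β₁)*β₂) * (ζ₁ n ω : ℝ) +
        ((α₂+β₁)*α₂ - (α₁+β₂)*β₁) * (ζ₂ n ω : ℝ)) / R n ω := by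
      rw [hddef]
      simp only [if_pos hx, if_pos hy, hWR]
      field_simp
      ring
    have h1 : (α₁+β₂)*α₁ - (α₂+β₁)*β₂ ≤ K * (α₁+β₂) := by
      have hKge : ((α₁+β₂)*α₁ - (α₂+β₁)*β₂)/(α₁+β₂) ≤ K := by
        rw [hKdef]
        exact le_max_of_le_left (le_max_left _ _)
      exact (div_le_iff₀ hp).mp hKge
    have h2 : (α₂+β₁)*α₂ - (α₁+β₂)*β₁ ≤ K * (α₂+β₁) := by
      have hKge : ((α₂+β₁)*α₂ - (α₁+β₂)*β₁)/(α₂+β₁) ≤ K := by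
        rw [hKdef]
        exact le_max_of_le_left (le_max_right _ _)
      exact (div_le_iff₀ hq).mp hKge
    have hxnn : (0:ℝ) ≤ (ζ₁ n ω : ℝ) := Nat.cast_nonneg _
    have hynn : (0:ℝ) ≤ (ζ₂ n ω : ℝ) := Nat.cast_nonneg _
    have ha : ((α₁+β₂)*α₁ - (α₂+β₁)*β₂) * (ζ₁ n ω : ℝ) ≤ (K*(α₁+β₂)) * (ζ₁ n ω : ℝ) :=
      mul_le_mul_of_nonneg_right h1 hxnn
    have hb : ((α₂+β₁)*α₂ - (α₁+β₂)*β₁) * (ζ₂ n ω : ℝ) ≤ (K*(α₂+β₁)) * (ζ₂ n ω : ℝ) :=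
      mul_le_mul_of_nonneg_right h2 hynn
    have hKR : K * R n ω = (K*(α₁+β₂)) * (ζ₁ n ω : ℝ) + (K*(α₂+β₁)) * (ζ₂ n ω : ℝ)
        + K*(l₁+l₂) := by rw [hR]; ring
    have hKl : 0 ≤ K*(l₁+l₂) := mul_nonneg hK0 (by linarith)
    rw [hde, div_le_iff₀ hRpos]
    have hexp : (K + ((α₁+β₂)*l₁ + (α₂+β₁)*l₂) / R n ω) * R n ω =
        K * R n ω + ((α₁+β₂)*l₁ + (α₂+β₁)*l₂) := by
      field_simp
    rw [hexp]
    linarith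
  have main := final_glue P ℱ R d (2*((α₁+β₂)+(α₂+β₁))) ((α₁+β₂)*l₁ + (α₂+β₁)*l₂)
    K (α₁ + r * β₂) (l₁+l₂) (by linarith) (by linarith) (by positivity) hK0 hKlt
    hRmeasF hdmeasF hRint hdint
    (by intro n ω; have := hdbd n ω; linarith)
    (by intro n; filter_upwards [hRdiff n] with ω h; linarith)
    hRnn hdrift (fun ω => ∀ n, ζ₁ n ω ≠ 0 ∧ ζ₂ n ω ≠ 0) hdK
  exact main
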